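/- arXiv:2110.11750 — 2 statements merged into one kernel-verified Lean document; each statement's English description precedes it below -/
import Mathlib

section
/- The minimal operator L₀ is symmetric: for all u, v ∈ Dom(L₀) one has ⟨L₀u, v⟩_{L²(ℝ)} = ⟨u, L₀v⟩_{L²(ℝ)}. -/
open MeasureTheory Complex Filter Set

noncomputable section

/-- The complex Hilbert space `L²(ℝ)`. -/
abbrev Hsp : Type := Lp ℂ 2 (volume : Measure ℝ)

/-- `u` is locally absolutely continuous on `ℝ` with a.e. derivative `g`
(i.e. `u` is the indefinite integral of the locally integrable function `g`). -/
def HasLocDeriv (u g : ℝ → ℂ) : Prop :=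
  LocallyIntegrable g volume ∧ ∀ x : ℝ, u x = u 0 + ∫ t in (0:ℝ)..x, g t

lemma HasLocDeriv.intervalIntegrable {u g : ℝ → ℂ} (h : HasLocDeriv u g) (a b : ℝ) :
    IntervalIntegrable g volume a b :=
  (h.1.integrableOn_isCompact isCompact_uIcc).intervalIntegrable

lemma HasLocDeriv.congr_fun {u v g : ℝ → ℂ} (h : HasLocDeriv u g) (huv : ∀ x, v x = u x) :
    HasLocDeriv v g :=
  ⟨h.1, fun x => by rw [huv x, huv 0]; exact h.2 x⟩

lemma HasLocDeriv.zero : HasLocDeriv (0 : ℝ → ℂ) 0 := by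
  refine ⟨locallyIntegrable_const (0 : ℂ), fun x => by simp⟩

lemma HasLocDeriv.add {u g v h' : ℝ → ℂ} (hu : HasLocDeriv u g) (hv : HasLocDeriv v h') :
    HasLocDeriv (fun x => u x + v x) (fun x => g x + h' x) := by
  refine ⟨hu.1.add hv.1, fun x => ?_⟩
  show u x + v x = u 0 + v 0 + ∫ t in (0:ℝ)..x, (g t + h' t)
  rw [intervalIntegral.integral_add (hu.intervalIntegrable 0 x) (hv.intervalIntegrable 0 x),
    hu.2 x, hv.2 x]
  ring

lemma HasLocDeriv.const_mul {u g : ℝ → ℂ} (c : ℂ) (hu : HasLocDeriv u g) :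
    HasLocDeriv (fun x => c * u x) (fun x => c * g x) := by
  have hli : LocallyIntegrable (fun x => c * g x) volume := hu.1.smul c
  refine ⟨hli, fun x => ?_⟩
  have h : ∫ t in (0:ℝ)..x, c * g t = c * ∫ t in (0:ℝ)..x, g t := by
    simpa [smul_eq_mul] using intervalIntegral.integral_smul c g (a := (0:ℝ)) (b := x) (μ := volume)
  show c * u x = c * u 0 + ∫ t in (0:ℝ)..x, c * g t
  rw [h, hu.2 x]
  ring

/-- The first quasi-derivative `u^{[1]} = p u' - (Q + i r) u`. -/
def qd1 (p Q r : ℝ → ℝ) (u u' : ℝ → ℂ) : ℝ → ℂ :=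
  fun x => (p x : ℂ) * u' x - ((Q x : ℂ) + Complex.I * (r x : ℂ)) * u x

/-- `u` belongs (locally) to the domain of the quasi-differential expression:
`u` is locally absolutely continuous with derivative `u'` and the first quasi-derivative
`u^{[1]} = p u' - (Q + i r) u` is locally absolutely continuous with derivative `w`. -/
def QDom (p Q s r : ℝ → ℝ) (u u' w : ℝ → ℂ) : Prop :=
  HasLocDeriv u u' ∧ HasLocDeriv (qd1 p Q r u u') w

/-- The quasi-differential expression `l[u] = -u^{[2]}` where
`u^{[2]} = (u^{[1]})' + ((Q - i r)/p) u^{[1]} + ((Q² + r²)/p - s) u`. -/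
def lExpr (p Q s r : ℝ → ℝ) (u u' w : ℝ → ℂ) : ℝ → ℂ := fun x =>
  -(w x + (((Q x : ℂ) - Complex.I * (r x : ℂ)) / (p x : ℂ)) * qd1 p Q r u u' x
    + ((((Q x) ^ 2 + (r x) ^ 2 : ℝ) : ℂ) / (p x : ℂ) - (s x : ℂ)) * u x)

/-- The standing minimal regularity assumptions on the real-valued coefficients:
`1/√|p|, Q/√|p|, r/√|p| ∈ L²_loc(ℝ)`, `s ∈ L¹_loc(ℝ)` and `1/p ≠ 0` a.e. -/
structure Coeffs (p Q s r : ℝ → ℝ) : Prop where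
  meas_p : Measurable p
  meas_Q : Measurable Q
  meas_s : Measurable s
  meas_r : Measurable r
  hp : LocallyIntegrable (fun x => 1 / |p x|) volume
  hQ : LocallyIntegrable (fun x => (Q x) ^ 2 / |p x|) volume
  hr : LocallyIntegrable (fun x => (r x) ^ 2 / |p x|) volume
  hs : LocallyIntegrable s volume
  hp0 : ∀ᵐ x ∂(volume : Measure ℝ), p x ≠ 0

lemma qd1_add_eq (p Q r : ℝ → ℝ) (u₁ u₁' u₂ u₂' : ℝ → ℂ) (x : ℝ) :
    qd1 p Q r (fun y => u₁ y + u₂ y) (fun y => u₁' y + u₂' y) x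
      = qd1 p Q r u₁ u₁' x + qd1 p Q r u₂ u₂' x := by
  simp only [qd1]; ring

lemma qd1_smul_eq (p Q r : ℝ → ℝ) (c : ℂ) (u u' : ℝ → ℂ) (x : ℝ) :
    qd1 p Q r (fun y => c * u y) (fun y => c * u' y) x = c * qd1 p Q r u u' x := by
  simp only [qd1]; ring

lemma QDom.zero (p Q s r : ℝ → ℝ) : QDom p Q s r 0 0 0 := by
  refine ⟨HasLocDeriv.zero, HasLocDeriv.zero.congr_fun fun x => ?_⟩
  simp [qd1]

lemma QDom.add {p Q s r : ℝ → ℝ} {u₁ u₁' w₁ u₂ u₂' w₂ : ℝ → ℂ}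
    (h₁ : QDom p Q s r u₁ u₁' w₁) (h₂ : QDom p Q s r u₂ u₂' w₂) :
    QDom p Q s r (fun x => u₁ x + u₂ x) (fun x => u₁' x + u₂' x) (fun x => w₁ x + w₂ x) :=
  ⟨h₁.1.add h₂.1, (h₁.2.add h₂.2).congr_fun (qd1_add_eq p Q r u₁ u₁' u₂ u₂')⟩

lemma QDom.smul {p Q s r : ℝ → ℝ} {u u' w : ℝ → ℂ} (c : ℂ) (h : QDom p Q s r u u' w) :
    QDom p Q s r (fun x => c * u x) (fun x => c * u' x) (fun x => c * w x) :=
  ⟨h.1.const_mul c, (h.2.const_mul c).congr_fun (qd1_smul_eq p Q r c u u')⟩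

lemma lExpr_zero (p Q s r : ℝ → ℝ) (x : ℝ) : lExpr p Q s r 0 0 0 x = 0 := by
  simp [lExpr, qd1]

lemma lExpr_add (p Q s r : ℝ → ℝ) (u₁ u₁' w₁ u₂ u₂' w₂ : ℝ → ℂ) (x : ℝ) :
    lExpr p Q s r (fun y => u₁ y + u₂ y) (fun y => u₁' y + u₂' y) (fun y => w₁ y + w₂ y) x
      = lExpr p Q s r u₁ u₁' w₁ x + lExpr p Q s r u₂ u₂' w₂ x := by
  simp only [lExpr, qd1]; ring

lemma lExpr_smul (p Q s r : ℝ → ℝ) (c : ℂ) (u u' w : ℝ → ℂ) (x : ℝ) :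
    lExpr p Q s r (fun y => c * u y) (fun y => c * u' y) (fun y => c * w y) x
      = c * lExpr p Q s r u u' w x := by
  simp only [lExpr, qd1]; ring

/-- The graph of the maximal operator `L` in `L²(ℝ) × L²(ℝ)`. -/
def maxGraph (p Q s r : ℝ → ℝ) : Submodule ℂ (Hsp × Hsp) where
  carrier := {fg | ∃ u u' w, QDom p Q s r u u' w ∧ (⇑fg.1 =ᵐ[volume] u) ∧
    (⇑fg.2 =ᵐ[volume] lExpr p Q s r u u' w)}
  zero_mem' := by
    refine ⟨0, 0, 0, QDom.zero p Q s r, ?_, ?_⟩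
    · filter_upwards [Lp.coeFn_zero ℂ 2 (volume : Measure ℝ)] with x hx using hx
    · filter_upwards [Lp.coeFn_zero ℂ 2 (volume : Measure ℝ)] with x hx
      rw [lExpr_zero]; exact hx
  add_mem' := by
    rintro ⟨f₁, g₁⟩ ⟨f₂, g₂⟩ ⟨u₁, u₁', w₁, hq₁, hf₁, hg₁⟩ ⟨u₂, u₂', w₂, hq₂, hf₂, hg₂⟩
    refine ⟨fun x => u₁ x + u₂ x, fun x => u₁' x + u₂' x, fun x => w₁ x + w₂ x,
      hq₁.add hq₂, ?_, ?_⟩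
    · filter_upwards [Lp.coeFn_add f₁ f₂, hf₁, hf₂] with x h1 h2 h3
      show (⇑(f₁ + f₂)) x = _
      rw [h1]; simp [h2, h3]
    · filter_upwards [Lp.coeFn_add g₁ g₂, hg₁, hg₂] with x h1 h2 h3
      show (⇑(g₁ + g₂)) x = _
      rw [h1, lExpr_add]; simp [h2, h3]
  smul_mem' := by
    rintro c ⟨f, g⟩ ⟨u, u', w, hq, hf, hg⟩
    refine ⟨fun x => c * u x, fun x => c * u' x, fun x => c * w x, hq.smul c, ?_, ?_⟩
    · filter_upwards [Lp.coeFn_smul c f, hf] with x h1 h2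
      show (⇑(c • f)) x = _
      rw [h1]; simp [h2]
    · filter_upwards [Lp.coeFn_smul c g, hg] with x h1 h2
      show (⇑(c • g)) x = _
      rw [h1, lExpr_smul]; simp [h2]

/-- The graph of the preminimal operator `L₀₀` (compactly supported members of the graph
of the maximal operator). -/
def preminGraph (p Q s r : ℝ → ℝ) : Submodule ℂ (Hsp × Hsp) where
  carrier := {fg | ∃ u u' w, QDom p Q s r u u' w ∧ HasCompactSupport u ∧
    (⇑fg.1 =ᵐ[volume] u) ∧ (⇑fg.2 =ᵐ[volume] lExpr p Q s r u u' w)}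
  zero_mem' := by
    refine ⟨0, 0, 0, QDom.zero p Q s r, by simpa using HasCompactSupport.zero, ?_, ?_⟩
    · filter_upwards [Lp.coeFn_zero ℂ 2 (volume : Measure ℝ)] with x hx using hx
    · filter_upwards [Lp.coeFn_zero ℂ 2 (volume : Measure ℝ)] with x hx
      rw [lExpr_zero]; exact hx
  add_mem' := by
    rintro ⟨f₁, g₁⟩ ⟨f₂, g₂⟩ ⟨u₁, u₁', w₁, hq₁, hc₁, hf₁, hg₁⟩ ⟨u₂, u₂', w₂, hq₂, hc₂, hf₂, hg₂⟩
    refine ⟨fun x => u₁ x + u₂ x, fun x => u₁' x + u₂' x, fun x => w₁ x + w₂ x,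
      hq₁.add hq₂, hc₁.add hc₂, ?_, ?_⟩
    · filter_upwards [Lp.coeFn_add f₁ f₂, hf₁, hf₂] with x h1 h2 h3
      show (⇑(f₁ + f₂)) x = _
      rw [h1]; simp [h2, h3]
    · filter_upwards [Lp.coeFn_add g₁ g₂, hg₁, hg₂] with x h1 h2 h3
      show (⇑(g₁ + g₂)) x = _
      rw [h1, lExpr_add]; simp [h2, h3]
  smul_mem' := by
    rintro c ⟨f, g⟩ ⟨u, u', w, hq, hc, hf, hg⟩
    refine ⟨fun x => c * u x, fun x => c * u' x, fun x => c * w x, hq.smul c,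
      hc.mono ?_, ?_, ?_⟩
    · intro x hx
      simp only [Function.mem_support, ne_eq] at hx ⊢
      exact fun h => hx (by rw [h, mul_zero])
    · filter_upwards [Lp.coeFn_smul c f, hf] with x h1 h2
      show (⇑(c • f)) x = _
      rw [h1]; simp [h2]
    · filter_upwards [Lp.coeFn_smul c g, hg] with x h1 h2
      show (⇑(c • g)) x = _
      rw [h1, lExpr_smul]; simp [h2]

/-- The maximal operator `L`, an unbounded operator in `L²(ℝ)`. -/
def maxOp (p Q s r : ℝ → ℝ) : Hsp →ₗ.[ℂ] Hsp := (maxGraph p Q s r).toLinearPMap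

/-- The preminimal operator `L₀₀`, the restriction of `L` to compactly supported functions. -/
def preminOp (p Q s r : ℝ → ℝ) : Hsp →ₗ.[ℂ] Hsp := (preminGraph p Q s r).toLinearPMap

/-- The minimal operator `L₀`, the closure of `L₀₀`. -/
def minOp (p Q s r : ℝ → ℝ) : Hsp →ₗ.[ℂ] Hsp := (preminOp p Q s r).closure

/-- The boundary bilinear form `[u,v](t) = u(t)·conj(v^{[1]}(t)) − u^{[1]}(t)·conj(v(t))`. -/
def brkt (p Q r : ℝ → ℝ) (u u' v v' : ℝ → ℂ) (t : ℝ) : ℂ :=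
  u t * (starRingEnd ℂ) (qd1 p Q r v v' t) - qd1 p Q r u u' t * (starRingEnd ℂ) (v t)

/-- `u, u', w` is a concrete representative of `f` as a member of `Dom(L)`:
`u` is a representative of the `L²`-class `f`, `u` and `u^{[1]}` are locally absolutely
continuous (with derivatives `u'` and `w` respectively) and `l[u] ∈ L²(ℝ)`. -/
def IsMaxRep (p Q s r : ℝ → ℝ) (f : Hsp) (u u' w : ℝ → ℂ) : Prop :=
  QDom p Q s r u u' w ∧ (⇑f =ᵐ[volume] u) ∧ MemLp (lExpr p Q s r u u' w) 2 volume

/-- Function-level membership in the domain of the preminimal operator `L₀₀`: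
`v` and `v^{[1]}` are locally absolutely continuous, `v, l[v] ∈ L²(ℝ)` and `v` has
compact support. -/
def MemPremin (p Q s r : ℝ → ℝ) (v : ℝ → ℂ) : Prop :=
  ∃ v' w : ℝ → ℂ, QDom p Q s r v v' w ∧ MemLp v 2 volume ∧
    MemLp (lExpr p Q s r v v' w) 2 volume ∧ HasCompactSupport v

/-- `p ∈ W¹_{2,loc}(ℝ)` (for a real-valued function), with weak derivative `p' ∈ L²_loc`. -/
def W12locR (p p' : ℝ → ℝ) : Prop :=
  LocallyIntegrable p' volume ∧ LocallyIntegrable (fun x => (p' x) ^ 2) volume ∧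
  ∀ x : ℝ, p x = p 0 + ∫ t in (0:ℝ)..x, p' t

/-- `φ ∈ W²₂(ℝ)` with compact support: `φ, φ', φ'' ∈ L²(ℝ)` where `φ'` and `φ''` are the
first and second weak derivatives of `φ`, and `supp φ` is compact. -/
def W22cs (φ φ' φ'' : ℝ → ℝ) : Prop :=
  LocallyIntegrable φ' volume ∧ LocallyIntegrable φ'' volume ∧
  MemLp φ 2 volume ∧ MemLp φ' 2 volume ∧ MemLp φ'' 2 volume ∧
  (∀ x : ℝ, φ x = φ 0 + ∫ t in (0:ℝ)..x, φ' t) ∧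
  (∀ x : ℝ, φ' x = φ' 0 + ∫ t in (0:ℝ)..x, φ'' t) ∧
  HasCompactSupport φ

/-- `p ∈ W¹₂([α,β]) = H¹([α,β])` with weak derivative `p'` on the interval `[α,β]`. -/
def W12OnIcc (p p' : ℝ → ℝ) (α β : ℝ) : Prop :=
  IntegrableOn p' (Set.Icc α β) volume ∧ MemLp p' 2 (volume.restrict (Set.Icc α β)) ∧
  ∀ x ∈ Set.Icc α β, p x = p α + ∫ t in α..x, p' t

namespace MinOpAux

/-! ### Basic facts about `HasLocDeriv` -/

lemma hasLocDeriv_continuous {u g : ℝ → ℂ} (h : HasLocDeriv u g) : Continuous u := by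
  have h1 : Continuous fun x : ℝ => u 0 + ∫ t in (0:ℝ)..x, g t :=
    continuous_const.add (intervalIntegral.continuous_primitive
      (fun a b => h.intervalIntegrable a b) 0)
  exact h1.congr fun x => (h.2 x).symm

lemma hasLocDeriv_sub {u g v h' : ℝ → ℂ} (hu : HasLocDeriv u g) (hv : HasLocDeriv v h') :
    HasLocDeriv (fun x => u x - v x) (fun x => g x - h' x) := by
  have h1 := hu.add (hv.const_mul (-1))
  have e1 : (fun x => g x + (-1) * h' x) = fun x => g x - h' x := by
    funext x; ring
  rw [e1] at h1
  exact h1.congr_fun fun x => by ring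

lemma intervalIntegral_conj {g : ℝ → ℂ} (a b : ℝ) :
    ∫ t in a..b, (starRingEnd ℂ) (g t) = (starRingEnd ℂ) (∫ t in a..b, g t) := by
  simp only [intervalIntegral, map_sub, integral_conj]

lemma hasLocDeriv_conj {u g : ℝ → ℂ} (h : HasLocDeriv u g) :
    HasLocDeriv (fun x => (starRingEnd ℂ) (u x)) (fun x => (starRingEnd ℂ) (g x)) := by
  constructor
  · intro x
    obtain ⟨s, hs, hint⟩ := h.1 x
    refine ⟨s, hs, ?_⟩
    have hint' : Integrable g (volume.restrict s) := hint
    refine hint'.mono (Complex.continuous_conj.comp_aestronglyMeasurable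
      hint'.aestronglyMeasurable) (Filter.Eventually.of_forall fun x => ?_)
    simp
  · intro x
    show (starRingEnd ℂ) (u x) = (starRingEnd ℂ) (u 0) + _
    rw [h.2 x, map_add, ← intervalIntegral_conj]

lemma intervalIntegral_eq_sub {u g : ℝ → ℂ} (h : HasLocDeriv u g) (a b : ℝ) :
    ∫ t in a..b, g t = u b - u a := by
  rw [h.2 a, h.2 b]
  have := intervalIntegral.integral_interval_sub_left (h.intervalIntegrable 0 b)
    (h.intervalIntegrable 0 a)
  rw [← this]; ring

/-- If all primitives of a locally integrable function vanish, the function is a.e. zero. -/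
lemma ae_zero_of_primitive_zero {f : ℝ → ℂ} (hf : LocallyIntegrable f volume)
    (h : ∀ x : ℝ, (∫ t in (0:ℝ)..x, f t) = 0) : f =ᵐ[volume] 0 := by
  filter_upwards [(IsUnifLocDoublingMeasure.vitaliFamily (volume : Measure ℝ) 1).ae_tendsto_average
    hf] with x hx
  have h2 : Tendsto (fun y => ⨍ t in Icc x y, f t) (nhdsWithin x (Ioi x)) (nhds (f x)) :=
    hx.comp (Real.tendsto_Icc_vitaliFamily_right x)
  have h3 : ∀ᶠ y in nhdsWithin x (Ioi x), (⨍ t in Icc x y, f t) = 0 := by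
    filter_upwards [self_mem_nhdsWithin] with y (hy : x < y)
    have hI : ∫ t in Icc x y, f t = 0 := by
      rw [integral_Icc_eq_integral_Ioc, ← intervalIntegral.integral_of_le hy.le]
      have := intervalIntegral.integral_interval_sub_left
        ((hf.integrableOn_isCompact isCompact_uIcc).intervalIntegrable (a := 0) (b := y))
        ((hf.integrableOn_isCompact isCompact_uIcc).intervalIntegrable (a := 0) (b := x))
      rw [← this, h y, h x, sub_zero]
    rw [setAverage_eq, hI, smul_zero]
  have h4 : Tendsto (fun y => ⨍ t in Icc x y, f t) (nhdsWithin x (Ioi x)) (nhds 0) :=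
    Tendsto.congr' (h3.mono fun y hy => hy.symm) tendsto_const_nhds
  exact (tendsto_nhds_unique h4 h2).symm


/-! ### Product rule for primitives (integration by parts), via Fubini -/

lemma primitive_mul_Ioc {g h : ℝ → ℂ} (hg : LocallyIntegrable g volume)
    (hh : LocallyIntegrable h volume) {F G : ℝ → ℂ}
    (hF : ∀ x, F x = F 0 + ∫ t in (0:ℝ)..x, g t)
    (hG : ∀ x, G x = G 0 + ∫ t in (0:ℝ)..x, h t)
    {a b : ℝ} (hab : a ≤ b) :
    ∫ x in Ioc a b, (F x * h x + g x * G x) = F b * G b - F a * G a := by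
  have hgii : ∀ c d : ℝ, IntervalIntegrable g volume c d := fun c d =>
    (hg.integrableOn_isCompact isCompact_uIcc).intervalIntegrable
  have hhii : ∀ c d : ℝ, IntervalIntegrable h volume c d := fun c d =>
    (hh.integrableOn_isCompact isCompact_uIcc).intervalIntegrable
  have hFsub : ∀ c d : ℝ, c ≤ d → F d - F c = ∫ t in Ioc c d, g t := by
    intro c d hcd
    rw [← intervalIntegral.integral_of_le hcd,
      ← intervalIntegral.integral_interval_sub_left (hgii 0 d) (hgii 0 c), hF c, hF d]
    ring
  have hGsub : ∀ c d : ℝ, c ≤ d → G d - G c = ∫ t in Ioc c d, h t := by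
    intro c d hcd
    rw [← intervalIntegral.integral_of_le hcd,
      ← intervalIntegral.integral_interval_sub_left (hhii 0 d) (hhii 0 c), hG c, hG d]
    ring
  have hFc : Continuous F := by
    have h1 : Continuous fun x : ℝ => F 0 + ∫ t in (0:ℝ)..x, g t :=
      continuous_const.add (intervalIntegral.continuous_primitive hgii 0)
    exact h1.congr fun x => (hF x).symm
  have hGc : Continuous G := by
    have h1 : Continuous fun x : ℝ => G 0 + ∫ t in (0:ℝ)..x, h t :=
      continuous_const.add (intervalIntegral.continuous_primitive hhii 0)
    exact h1.congr fun x => (hG x).symm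
  set μ := volume.restrict (Ioc a b) with hμ
  have hgI : IntegrableOn g (Ioc a b) volume :=
    (hg.integrableOn_isCompact isCompact_Icc).mono_set Ioc_subset_Icc_self
  have hhI : IntegrableOn h (Ioc a b) volume :=
    (hh.integrableOn_isCompact isCompact_Icc).mono_set Ioc_subset_Icc_self
  -- the kernel e x t = [t ≤ x] g t * h x
  set e : ℝ → ℝ → ℂ := fun x t => if t ≤ x then g t * h x else 0 with he
  have heint : Integrable (Function.uncurry e) (μ.prod μ) := by
    have h1 : Integrable (fun z : ℝ × ℝ => h z.1 * g z.2) (μ.prod μ) :=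
      MeasureTheory.Integrable.mul_prod hhI hgI
    have h2 : Integrable ({z : ℝ × ℝ | z.2 ≤ z.1}.indicator
        (fun z : ℝ × ℝ => h z.1 * g z.2)) (μ.prod μ) :=
      h1.indicator (measurableSet_le measurable_snd measurable_fst)
    refine h2.congr (Filter.Eventually.of_forall fun z => ?_)
    simp only [Set.indicator_apply, Set.mem_setOf_eq, Function.uncurry, he]
    split_ifs <;> ring
  -- inner formula in x
  have hEx : ∀ x ∈ Ioc a b, (∫ t, e x t ∂μ) = (F x - F a) * h x := by
    intro x hx
    have h1 : (fun t => e x t) = fun t => (Iic x).indicator (fun t => g t * h x) t := by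
      funext t
      simp only [he, Set.indicator_apply, Set.mem_Iic]
    rw [h1, integral_indicator measurableSet_Iic, hμ,
      Measure.restrict_restrict measurableSet_Iic]
    have h2 : Iic x ∩ Ioc a b = Ioc a x := by
      ext t
      simp only [Set.mem_inter_iff, Set.mem_Iic, Set.mem_Ioc]
      exact ⟨fun ⟨h1', h2', _⟩ => ⟨h2', h1'⟩, fun ⟨h1', h2'⟩ => ⟨h2', h1', h2'.trans hx.2⟩⟩
    rw [h2, hFsub a x hx.1.le, integral_mul_const]
  -- inner formula in t after swapping
  have hEt : ∀ t ∈ Ioc a b, (∫ x, e x t ∂μ) = g t * (G b - G t) := by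
    intro t ht
    have h1 : (fun x => e x t) = fun x => (Ici t).indicator (fun x => g t * h x) x := by
      funext x
      simp only [he, Set.indicator_apply, Set.mem_Ici]
    rw [h1, integral_indicator measurableSet_Ici, hμ,
      Measure.restrict_restrict measurableSet_Ici]
    have h2 : Ici t ∩ Ioc a b = Icc t b := by
      ext x
      simp only [Set.mem_inter_iff, Set.mem_Ici, Set.mem_Ioc, Set.mem_Icc]
      exact ⟨fun ⟨h1', _, h3'⟩ => ⟨h1', h3'⟩, fun ⟨h1', h2'⟩ => ⟨h1', ht.1.trans_le h1', h2'⟩⟩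
    rw [h2, integral_Icc_eq_integral_Ioc, integral_const_mul, ← hGsub t b ht.2]
  -- integrability of the two summands
  have hFh : IntegrableOn (fun x => F x * h x) (Ioc a b) volume :=
    MeasureTheory.IntegrableOn.continuousOn_mul_of_subset hFc.continuousOn hhI
      isCompact_Icc measurableSet_Ioc Ioc_subset_Icc_self
  have hgG : IntegrableOn (fun x => g x * G x) (Ioc a b) volume :=
    MeasureTheory.IntegrableOn.mul_continuousOn_of_subset hgI hGc.continuousOn
      measurableSet_Ioc isCompact_Icc Ioc_subset_Icc_self
  -- main computation
  have key1 : (∫ x, F x * h x ∂μ) = F a * (G b - G a) + ∫ x, (∫ t, e x t ∂μ) ∂μ := by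
    have h1 : (∫ x, F x * h x ∂μ) = ∫ x in Ioc a b, (F a * h x + (∫ t, e x t ∂μ)) ∂volume := by
      refine setIntegral_congr_fun measurableSet_Ioc fun x hx => ?_
      rw [hEx x hx]; ring
    rw [h1]
    have h2 : Integrable (fun x => F a * h x) μ := hhI.const_mul _
    have h3 : Integrable (fun x => ∫ t, e x t ∂μ) μ := heint.integral_prod_left
    rw [← hμ, integral_add h2 h3, integral_const_mul, ← hGsub a b hab]
  have key2 : (∫ x, (∫ t, e x t ∂μ) ∂μ) = G b * (F b - F a) - ∫ t, g t * G t ∂μ := by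
    rw [MeasureTheory.integral_integral_swap heint]
    have h1 : (∫ t, (∫ x, e x t ∂μ) ∂μ) = ∫ t in Ioc a b, (G b * g t - g t * G t) ∂volume := by
      refine setIntegral_congr_fun measurableSet_Ioc fun t ht => ?_
      rw [hEt t ht]; ring
    rw [h1]
    have h2 : Integrable (fun t => G b * g t) μ := hgI.const_mul _
    rw [← hμ, integral_sub h2 hgG, integral_const_mul, ← hFsub a b hab]
  rw [integral_add hFh hgG]
  rw [hμ] at key1 key2
  rw [key1, key2]
  ring

lemma hasLocDeriv_mul {u g v h : ℝ → ℂ} (hu : HasLocDeriv u g) (hv : HasLocDeriv v h) :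
    HasLocDeriv (fun x => u x * v x) (fun x => u x * h x + g x * v x) := by
  have hcu : Continuous u := hasLocDeriv_continuous hu
  have hcv : Continuous v := hasLocDeriv_continuous hv
  constructor
  · rw [locallyIntegrable_iff]
    intro K hK
    have h1 : IntegrableOn (fun x => u x * h x) K volume :=
      MeasureTheory.IntegrableOn.continuousOn_mul_of_subset hcu.continuousOn
        (hv.1.integrableOn_isCompact hK) hK hK.measurableSet Subset.rfl
    have h2 : IntegrableOn (fun x => g x * v x) K volume :=
      MeasureTheory.IntegrableOn.mul_continuousOn_of_subset
        (hu.1.integrableOn_isCompact hK) hcv.continuousOn hK.measurableSet hK Subset.rfl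
    exact h1.add h2
  · intro x
    rcases le_or_gt 0 x with hx | hx
    · have := primitive_mul_Ioc hu.1 hv.1 hu.2 hv.2 hx
      rw [intervalIntegral.integral_of_le hx, this]
      ring
    · have hI := primitive_mul_Ioc hu.1 hv.1 hu.2 hv.2 hx.le
      show u x * v x = u 0 * v 0 + ∫ t in (0:ℝ)..x, (u t * h t + g t * v t)
      rw [intervalIntegral.integral_symm x 0, intervalIntegral.integral_of_le hx.le, hI]
      ring

/-- The pointwise derivative of the boundary form `brkt`. -/
def brktD (p Q r : ℝ → ℝ) (u u' wu v v' wv : ℝ → ℂ) : ℝ → ℂ := fun x =>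
  (u x * (starRingEnd ℂ) (wv x) + u' x * (starRingEnd ℂ) (qd1 p Q r v v' x)) -
    (qd1 p Q r u u' x * (starRingEnd ℂ) (v' x) + wu x * (starRingEnd ℂ) (v x))

lemma brkt_hasLocDeriv {p Q s r : ℝ → ℝ} {u u' wu v v' wv : ℝ → ℂ}
    (hu : QDom p Q s r u u' wu) (hv : QDom p Q s r v v' wv) :
    HasLocDeriv (brkt p Q r u u' v v') (brktD p Q r u u' wu v v' wv) := by
  have h1 := hasLocDeriv_mul hu.1 (hasLocDeriv_conj hv.2)
  have h2 := hasLocDeriv_mul hu.2 (hasLocDeriv_conj hv.1)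
  exact (hasLocDeriv_sub h1 h2).congr_fun fun x => rfl

/-- The Lagrange identity, pointwise where `p x ≠ 0`. -/
lemma brktD_eq {p Q s r : ℝ → ℝ} {u u' wu v v' wv : ℝ → ℂ} {x : ℝ} (hp : p x ≠ 0) :
    brktD p Q r u u' wu v v' wv x
      = lExpr p Q s r u u' wu x * (starRingEnd ℂ) (v x)
        - u x * (starRingEnd ℂ) (lExpr p Q s r v v' wv x) := by
  have hpc : (p x : ℂ) ≠ 0 := by exact_mod_cast hp
  simp only [brktD, lExpr, qd1, map_sub, map_add, map_mul, map_neg, map_div₀,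
    Complex.conj_ofReal, Complex.conj_I]
  field_simp
  ring

/-! ### L² helpers -/

lemma memLp_conj {f : ℝ → ℂ} (hf : MemLp f 2 (volume : Measure ℝ)) :
    MemLp (fun x => (starRingEnd ℂ) (f x)) 2 (volume : Measure ℝ) := by
  refine ⟨Complex.continuous_conj.comp_aestronglyMeasurable hf.1, ?_⟩
  have h1 : eLpNorm (fun x => (starRingEnd ℂ) (f x)) 2 (volume : Measure ℝ)
      = eLpNorm f 2 volume :=
    eLpNorm_congr_norm_ae (Filter.Eventually.of_forall fun x => by simp)
  rw [h1]; exact hf.2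

lemma integrable_mul2 {f g : ℝ → ℂ} (hf : MemLp f 2 (volume : Measure ℝ))
    (hg : MemLp g 2 (volume : Measure ℝ)) : Integrable (fun x => f x * g x) volume := by
  have h12 : (1 : ENNReal) / 1 = 1 / 2 + 1 / 2 := by
    rw [ENNReal.div_add_div_same, one_add_one_eq_two,
      ENNReal.div_self (by norm_num) ENNReal.ofNat_ne_top, div_one]
  have h := MeasureTheory.MemLp.smul (φ := f) (f := g) (r := 1) hg hf
  exact memLp_one_iff_integrable.mp h

/-! ### The preminimal graph is the graph of an operator -/

lemma preminGraph_graphCond (p Q s r : ℝ → ℝ) :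
    ∀ z ∈ preminGraph p Q s r, z.1 = 0 → z.2 = 0 := by
  rintro ⟨f, k⟩ ⟨u, u', w, hq, hcs, hf, hk⟩ hf0
  simp only at hf0 hf hk ⊢
  subst hf0
  have hu0 : u =ᵐ[volume] 0 := by
    filter_upwards [hf, Lp.coeFn_zero ℂ 2 (volume : Measure ℝ)] with x h1 h2
    rw [← h1]; exact h2
  have hu0' : u = 0 :=
    (Continuous.ae_eq_iff_eq volume (hasLocDeriv_continuous hq.1) continuous_const).mp hu0
  have hu' : u' =ᵐ[volume] 0 := by
    refine ae_zero_of_primitive_zero hq.1.1 fun x => ?_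
    have h1 := hq.1.2 x
    rw [hu0'] at h1
    simp only [Pi.zero_apply, zero_add] at h1
    exact h1.symm
  have hqd0 : qd1 p Q r u u' =ᵐ[volume] 0 := by
    filter_upwards [hu'] with x hx
    simp [qd1, hx, hu0']
  have hqd0' : qd1 p Q r u u' = 0 :=
    (Continuous.ae_eq_iff_eq volume (hasLocDeriv_continuous hq.2) continuous_const).mp hqd0
  have hw0 : w =ᵐ[volume] 0 := by
    refine ae_zero_of_primitive_zero hq.2.1 fun x => ?_
    have h1 := hq.2.2 x
    rw [hqd0'] at h1
    simp only [Pi.zero_apply, zero_add] at h1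
    exact h1.symm
  have hl0 : lExpr p Q s r u u' w =ᵐ[volume] 0 := by
    filter_upwards [hw0] with x hx
    simp [lExpr, hx, congrFun hqd0' x, congrFun hu0' x]
  exact Lp.eq_zero_iff_ae_eq_zero.mpr (hk.trans hl0)

/-! ### Symmetry on the preminimal graph -/

lemma premin_symm (p Q s r : ℝ → ℝ) (hc : Coeffs p Q s r) {z₁ z₂ : Hsp × Hsp}
    (h₁ : z₁ ∈ preminGraph p Q s r) (h₂ : z₂ ∈ preminGraph p Q s r) :
    (inner ℂ z₁.2 z₂.1 : ℂ) = inner ℂ z₁.1 z₂.2 := by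
  obtain ⟨u, u', wu, hqu, hcsu, hfu, hgu⟩ := h₁
  obtain ⟨v, v', wv, hqv, hcsv, hfv, hgv⟩ := h₂
  set lu := lExpr p Q s r u u' wu with hlu
  set lv := lExpr p Q s r v v' wv with hlv
  have hu2 : MemLp u 2 (volume : Measure ℝ) := (Lp.memLp z₁.1).ae_eq hfu
  have hv2 : MemLp v 2 (volume : Measure ℝ) := (Lp.memLp z₂.1).ae_eq hfv
  have hlu2 : MemLp lu 2 (volume : Measure ℝ) := (Lp.memLp z₁.2).ae_eq hgu
  have hlv2 : MemLp lv 2 (volume : Measure ℝ) := (Lp.memLp z₂.2).ae_eq hgv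
  -- a radius outside of which both `u` and `v` vanish
  obtain ⟨R, hR⟩ := (hcsu.union hcsv).isBounded.subset_closedBall (0 : ℝ)
  have hnot : ∀ x : ℝ, |R| + 1 ≤ |x| → u x = 0 ∧ v x = 0 := by
    intro x hx
    have hxK : x ∉ Metric.closedBall (0 : ℝ) R := by
      simp only [Metric.mem_closedBall, Real.dist_eq, sub_zero]
      intro hle
      have h1 : |R| + 1 ≤ R := le_trans hx hle
      have h2 : R ≤ |R| := le_abs_self R
      linarith
    have hxK' : x ∉ tsupport u ∪ tsupport v := fun hmem => hxK (hR hmem)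
    exact ⟨image_eq_zero_of_notMem_tsupport fun h => hxK' (Or.inl h),
      image_eq_zero_of_notMem_tsupport fun h => hxK' (Or.inr h)⟩
  obtain ⟨a, b, hab, hout⟩ : ∃ a b : ℝ, a ≤ b ∧
      ∀ x : ℝ, x = a ∨ x = b ∨ x ∉ Ioc a b → |R| + 1 ≤ |x| := by
    refine ⟨-(|R| + 1), |R| + 1, by linarith [abs_nonneg R], ?_⟩
    intro x hx
    have h0 : (0:ℝ) ≤ |R| + 1 := by positivity
    rcases hx with rfl | rfl | hx
    · rw [abs_neg, _root_.abs_of_nonneg h0]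
    · rw [_root_.abs_of_nonneg h0]
    · rw [Set.mem_Ioc, not_and_or, not_lt, not_le] at hx
      rcases hx with hx | hx
      · calc |R| + 1 ≤ -x := by linarith
          _ ≤ |x| := neg_le_abs x
      · linarith [le_abs_self x]
  have hua : u a = 0 := (hnot a (hout a (Or.inl rfl))).1
  have hub : u b = 0 := (hnot b (hout b (Or.inr (Or.inl rfl)))).1
  have hva : v a = 0 := (hnot a (hout a (Or.inl rfl))).2
  have hvb : v b = 0 := (hnot b (hout b (Or.inr (Or.inl rfl)))).2
  -- fundamental theorem of calculus for the boundary form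
  have hB := brkt_hasLocDeriv hqu hqv
  have hfund : ∫ t in Ioc a b, brktD p Q r u u' wu v v' wv t = 0 := by
    rw [← intervalIntegral.integral_of_le hab, intervalIntegral_eq_sub hB a b]
    simp [brkt, hua, hub, hva, hvb]
  -- the Lagrange identity a.e.
  have hae : (fun t => lu t * (starRingEnd ℂ) (v t) - u t * (starRingEnd ℂ) (lv t))
      =ᵐ[volume.restrict (Ioc a b)] brktD p Q r u u' wu v v' wv :=
    ae_restrict_of_ae (hc.hp0.mono fun x hx => (brktD_eq (s := s) hx).symm)
  have h0 : ∫ t in Ioc a b,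
      (lu t * (starRingEnd ℂ) (v t) - u t * (starRingEnd ℂ) (lv t)) = 0 := by
    rw [integral_congr_ae hae]; exact hfund
  -- integrability of the products
  have hint1 : Integrable (fun t => lu t * (starRingEnd ℂ) (v t)) volume :=
    integrable_mul2 hlu2 (memLp_conj hv2)
  have hint2 : Integrable (fun t => u t * (starRingEnd ℂ) (lv t)) volume :=
    integrable_mul2 hu2 (memLp_conj hlv2)
  have hsplit : ∫ t in Ioc a b, lu t * (starRingEnd ℂ) (v t)
      = ∫ t in Ioc a b, u t * (starRingEnd ℂ) (lv t) := by
    rw [integral_sub hint1.integrableOn hint2.integrableOn] at h0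
    exact sub_eq_zero.mp h0
  -- vanishing outside
  have hcompl : ∀ x : ℝ, x ∉ Ioc a b → |R| + 1 ≤ |x| := fun x hx =>
    hout x (Or.inr (Or.inr hx))
  have hext1 : ∫ t in Ioc a b, lu t * (starRingEnd ℂ) (v t)
      = ∫ t, lu t * (starRingEnd ℂ) (v t) :=
    setIntegral_eq_integral_of_forall_compl_eq_zero fun x hx => by
      rw [(hnot x (hcompl x hx)).2]; simp
  have hext2 : ∫ t in Ioc a b, u t * (starRingEnd ℂ) (lv t)
      = ∫ t, u t * (starRingEnd ℂ) (lv t) :=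
    setIntegral_eq_integral_of_forall_compl_eq_zero fun x hx => by
      rw [(hnot x (hcompl x hx)).1]; simp
  have hmain : ∫ t, lu t * (starRingEnd ℂ) (v t) = ∫ t, u t * (starRingEnd ℂ) (lv t) := by
    rw [← hext1, ← hext2]; exact hsplit
  -- translate to inner products
  have hL : (inner ℂ z₁.2 z₂.1 : ℂ) = (starRingEnd ℂ) (∫ t, lu t * (starRingEnd ℂ) (v t)) := by
    rw [MeasureTheory.L2.inner_def, ← integral_conj]
    refine integral_congr_ae ?_
    filter_upwards [hgu, hfv] with x h1 h2
    rw [RCLike.inner_apply', h1, h2, map_mul, RCLike.conj_conj]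
  have hRt : (inner ℂ z₁.1 z₂.2 : ℂ) = (starRingEnd ℂ) (∫ t, u t * (starRingEnd ℂ) (lv t)) := by
    rw [MeasureTheory.L2.inner_def, ← integral_conj]
    refine integral_congr_ae ?_
    filter_upwards [hfu, hgv] with x h1 h2
    rw [RCLike.inner_apply', h1, h2, map_mul, RCLike.conj_conj]
  rw [hL, hRt, hmain]

end MinOpAux

/-- The minimal operator `L₀` is symmetric:
`⟨L₀u, v⟩ = ⟨u, L₀v⟩` for all `u, v ∈ Dom(L₀)`. -/
theorem minOp_symmetric (p Q s r : ℝ → ℝ) (hc : Coeffs p Q s r)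
    (u v : (minOp p Q s r).domain) :
    (inner ℂ ((minOp p Q s r) u) ((v : Hsp)) : ℂ)
      = (inner ℂ ((u : Hsp)) ((minOp p Q s r) v) : ℂ) := by
  classical
  have hgeq : (preminOp p Q s r).graph = preminGraph p Q s r :=
    Submodule.toLinearPMap_graph_eq _ (MinOpAux.preminGraph_graphCond p Q s r)
  have hsub : ((minOp p Q s r).graph : Set (Hsp × Hsp)) ⊆
      closure ((preminGraph p Q s r : Submodule ℂ (Hsp × Hsp)) : Set (Hsp × Hsp)) := by
    by_cases hcl : (preminOp p Q s r).IsClosable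
    · intro z hz
      have hz' : z ∈ (preminOp p Q s r).closure.graph := hz
      rw [← hcl.graph_closure_eq_closure_graph, hgeq] at hz'
      rw [← Submodule.topologicalClosure_coe]
      exact hz'
    · intro z hz
      have hz' : z ∈ (preminOp p Q s r).closure.graph := hz
      rw [LinearPMap.closure_def' hcl, hgeq] at hz'
      exact subset_closure hz'
  set S : Set (Hsp × Hsp) := ((preminGraph p Q s r : Submodule ℂ (Hsp × Hsp)) : Set (Hsp × Hsp))
    with hS
  have hsymm1 : ∀ z ∈ closure S, ∀ y ∈ S, (inner ℂ z.2 y.1 : ℂ) = inner ℂ z.1 y.2 := by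
    intro z hz y hy
    have hclosed : IsClosed {w : Hsp × Hsp | (inner ℂ w.2 y.1 : ℂ) = inner ℂ w.1 y.2} :=
      isClosed_eq ((continuous_snd.inner continuous_const))
        ((continuous_fst.inner continuous_const))
    exact closure_minimal (fun w hw => MinOpAux.premin_symm p Q s r hc hw hy) hclosed hz
  have hsymm2 : ∀ z ∈ closure S, ∀ y ∈ closure S, (inner ℂ z.2 y.1 : ℂ) = inner ℂ z.1 y.2 := by
    intro z hz y hy
    have hclosed : IsClosed {w : Hsp × Hsp | (inner ℂ z.2 w.1 : ℂ) = inner ℂ z.1 w.2} :=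
      isClosed_eq ((continuous_const.inner continuous_fst))
        ((continuous_const.inner continuous_snd))
    exact closure_minimal (fun w hw => hsymm1 z hz w hw) hclosed hy
  exact hsymm2 _ (hsub ((minOp p Q s r).mem_graph u)) _ (hsub ((minOp p Q s r).mem_graph v))

end
end

section
/- Let Δ ⊂ ℝ be a finite interval, and suppose p ∈ L^∞(Δ) and 1/p ∈ L^∞(Δ). Then (i) Q and r belong to L²(Δ), and (ii) every u ∈ Dom(L) satisfies u|_Δ ∈ W¹₂(Δ). In particular, if p, 1/p ∈ L^∞_loc(ℝ), then Q, r ∈ L²_loc(ℝ) and Dom(L) ⊂ W¹_{2,loc}(ℝ). -/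
open MeasureTheory Complex Filter Set

noncomputable section

/-- A function in `L^∞` is a.e. bounded by a nonnegative constant. -/
lemma memLpTop_ae_bound {E : Type*} [NormedAddCommGroup E] {μ : Measure ℝ} {f : ℝ → E}
    (h : MemLp f ⊤ μ) : ∃ C : ℝ, 0 ≤ C ∧ ∀ᵐ x ∂μ, ‖f x‖ ≤ C := by
  refine ⟨(eLpNormEssSup f μ).toReal, ENNReal.toReal_nonneg, ?_⟩
  have hlt : eLpNormEssSup f μ < ⊤ := by
    have := h.2; rwa [eLpNorm_exponent_top] at this
  filter_upwards [ae_le_eLpNormEssSup (f := f) (μ := μ)] with x hx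
  have h2 := ENNReal.toReal_mono hlt.ne hx
  simpa using h2

lemma HasLocDeriv.continuous {u g : ℝ → ℂ} (h : HasLocDeriv u g) : Continuous u := by
  have : Continuous fun x : ℝ => u 0 + ∫ t in (0:ℝ)..x, g t :=
    continuous_const.add (intervalIntegral.continuous_primitive (h.intervalIntegrable) 0)
  exact this.congr fun x => (h.2 x).symm

lemma memLp_restrict_Ioo_of_continuous {u : ℝ → ℂ} (hu : Continuous u) (a b : ℝ) :
    MemLp u 2 (volume.restrict (Set.Ioo a b)) := by
  haveI : IsFiniteMeasure (volume.restrict (Set.Ioo a b)) :=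
    ⟨by rw [Measure.restrict_apply_univ]; exact measure_Ioo_lt_top⟩
  obtain ⟨C, hC⟩ := (isCompact_Icc (a := a) (b := b)).exists_bound_of_continuousOn
    hu.continuousOn
  have hb : ∀ᵐ x ∂(volume.restrict (Set.Ioo a b)), ‖u x‖ ≤ C := by
    refine (ae_restrict_iff' measurableSet_Ioo).2 (ae_of_all _ fun x hx => ?_)
    exact hC x (Set.Ioo_subset_Icc_self hx)
  exact (memLp_top_of_bound (hu.aestronglyMeasurable.restrict) C hb).mono_exponent
    le_top

/-- `L²` membership on the interval from the weighted local integrability assumption. -/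
lemma memLp_two_of_weighted (p q : ℝ → ℝ) (hmq : Measurable q)
    (hq : LocallyIntegrable (fun x => (q x) ^ 2 / |p x|) volume)
    (hp0 : ∀ᵐ x ∂(volume : Measure ℝ), p x ≠ 0) (a b : ℝ)
    (hp : MemLp p ⊤ (volume.restrict (Set.Ioo a b))) :
    MemLp q 2 (volume.restrict (Set.Ioo a b)) := by
  obtain ⟨C, hC0, hC⟩ := memLpTop_ae_bound hp
  rw [memLp_two_iff_integrable_sq
    ((hmq.aestronglyMeasurable).restrict (s := Set.Ioo a b))]
  have hint : IntegrableOn (fun x => C * ((q x) ^ 2 / |p x|)) (Set.Ioo a b) volume :=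
    ((hq.integrableOn_isCompact isCompact_Icc).mono_set Set.Ioo_subset_Icc_self).const_mul C
  refine Integrable.mono' hint
    ((hmq.pow_const 2).aestronglyMeasurable.restrict) ?_
  filter_upwards [hC, ae_restrict_of_ae hp0] with x hx hx0
  have hap : |p x| ≠ 0 := abs_ne_zero.mpr hx0
  have h1 : (q x) ^ 2 = (q x) ^ 2 / |p x| * |p x| := (div_mul_cancel₀ _ hap).symm
  have h2 : 0 ≤ (q x) ^ 2 / |p x| := div_nonneg (sq_nonneg _) (abs_nonneg _)
  rw [Real.norm_eq_abs] at hx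
  rw [Real.norm_eq_abs, _root_.abs_of_nonneg (sq_nonneg _)]
  nlinarith [hx, h1, h2]

/-- Let `Δ = (a,b)` be a finite interval with `p, 1/p ∈ L^∞(Δ)`. Then
`Q, r ∈ L²(Δ)`, and every `u ∈ Dom(L)` satisfies `u|_Δ ∈ W¹₂(Δ)` (i.e. both `u` and its
derivative `u'` are square integrable on `Δ`). -/
theorem regularity_on_interval (p Q s r : ℝ → ℝ) (hc : Coeffs p Q s r)
    (a b : ℝ) (hab : a < b)
    (hp : MemLp p ⊤ (volume.restrict (Set.Ioo a b)))
    (hp' : MemLp (fun x => 1 / p x) ⊤ (volume.restrict (Set.Ioo a b))) :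
    (MemLp Q 2 (volume.restrict (Set.Ioo a b)) ∧ MemLp r 2 (volume.restrict (Set.Ioo a b))) ∧
    ∀ (f : Hsp) (u u' w : ℝ → ℂ), f ∈ (maxOp p Q s r).domain →
      IsMaxRep p Q s r f u u' w →
        MemLp u 2 (volume.restrict (Set.Ioo a b)) ∧
        MemLp u' 2 (volume.restrict (Set.Ioo a b)) := by
  have μfin : IsFiniteMeasure (volume.restrict (Set.Ioo a b)) :=
    ⟨by rw [Measure.restrict_apply_univ]; exact measure_Ioo_lt_top⟩
  have hQ2 : MemLp Q 2 (volume.restrict (Set.Ioo a b)) :=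
    memLp_two_of_weighted p Q hc.meas_Q hc.hQ hc.hp0 a b hp
  have hr2 : MemLp r 2 (volume.restrict (Set.Ioo a b)) :=
    memLp_two_of_weighted p r hc.meas_r hc.hr hc.hp0 a b hp
  refine ⟨⟨hQ2, hr2⟩, fun f u u' w _ hrep => ?_⟩
  obtain ⟨⟨hu, hqd⟩, _, _⟩ := hrep
  have hucont : Continuous u := hu.continuous
  have hqcont : Continuous (qd1 p Q r u u') := hqd.continuous
  refine ⟨memLp_restrict_Ioo_of_continuous hucont a b, ?_⟩
  -- bounds for u and qd1 on [a,b]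
  obtain ⟨Mu, hMu⟩ := (isCompact_Icc (a := a) (b := b)).exists_bound_of_continuousOn
    hucont.continuousOn
  obtain ⟨M1, hM1⟩ := (isCompact_Icc (a := a) (b := b)).exists_bound_of_continuousOn
    hqcont.continuousOn
  have hMu0 : 0 ≤ Mu := le_trans (norm_nonneg _) (hMu a ⟨le_refl a, le_of_lt hab⟩)
  have hM10 : 0 ≤ M1 := le_trans (norm_nonneg _) (hM1 a ⟨le_refl a, le_of_lt hab⟩)
  obtain ⟨C2, hC20, hC2⟩ := memLpTop_ae_bound hp'
  -- the dominating function
  set g : ℝ → ℝ := fun x => C2 * (M1 + Mu * (‖Q x‖ + ‖r x‖)) with hg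
  have hgmem : MemLp g 2 (volume.restrict (Set.Ioo a b)) := by
    have h1 : MemLp (fun x : ℝ => M1 + Mu * (‖Q x‖ + ‖r x‖)) 2
        (volume.restrict (Set.Ioo a b)) := by
      have h0 := ((hQ2.norm.add hr2.norm).const_mul Mu).add
        (memLp_const (μ := volume.restrict (Set.Ioo a b)) (p := 2) M1)
      refine h0.ae_eq (ae_of_all _ fun x => ?_)
      show Mu * (‖Q x‖ + ‖r x‖) + M1 = _
      ring
    simpa [hg] using h1.const_mul C2
  refine MemLp.of_le hgmem (hu.1.aestronglyMeasurable.restrict) ?_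
  filter_upwards [hC2, ae_restrict_of_ae hc.hp0,
    (ae_restrict_iff' measurableSet_Ioo).2 (ae_of_all _ fun x (hx : x ∈ Set.Ioo a b) => hx)]
    with x hC2x hpx hxab
  have hxIcc : x ∈ Set.Icc a b := Set.Ioo_subset_Icc_self hxab
  have hpℂ : (p x : ℂ) ≠ 0 := Complex.ofReal_ne_zero.mpr hpx
  have hux : u' x = (qd1 p Q r u u' x + ((Q x : ℂ) + Complex.I * (r x : ℂ)) * u x)
      / (p x : ℂ) := by
    rw [eq_div_iff hpℂ]
    simp only [qd1]; ring
  have hinv : ‖(p x : ℂ)‖⁻¹ ≤ C2 := by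
    have h1 : ‖(1 : ℝ) / p x‖ ≤ C2 := hC2x
    rw [norm_div, norm_one, one_div] at h1
    rw [Complex.norm_real]
    exact h1
  have hnum : ‖qd1 p Q r u u' x + ((Q x : ℂ) + Complex.I * (r x : ℂ)) * u x‖
      ≤ M1 + Mu * (‖Q x‖ + ‖r x‖) := by
    calc ‖qd1 p Q r u u' x + ((Q x : ℂ) + Complex.I * (r x : ℂ)) * u x‖
        ≤ ‖qd1 p Q r u u' x‖ + ‖((Q x : ℂ) + Complex.I * (r x : ℂ)) * u x‖ :=
          norm_add_le _ _
      _ = ‖qd1 p Q r u u' x‖ + ‖((Q x : ℂ) + Complex.I * (r x : ℂ))‖ * ‖u x‖ := by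
          rw [norm_mul]
      _ ≤ M1 + (‖Q x‖ + ‖r x‖) * Mu := by
          refine add_le_add (hM1 x hxIcc) ?_
          refine mul_le_mul ?_ (hMu x hxIcc) (norm_nonneg _)
            (add_nonneg (norm_nonneg _) (norm_nonneg _))
          calc ‖((Q x : ℂ) + Complex.I * (r x : ℂ))‖
              ≤ ‖(Q x : ℂ)‖ + ‖Complex.I * (r x : ℂ)‖ := norm_add_le _ _
            _ = ‖Q x‖ + ‖r x‖ := by
                rw [norm_mul, Complex.norm_I, one_mul, Complex.norm_real,
                  Complex.norm_real]
      _ = M1 + Mu * (‖Q x‖ + ‖r x‖) := by ring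
  have hnn : 0 ≤ M1 + Mu * (‖Q x‖ + ‖r x‖) :=
    add_nonneg hM10 (mul_nonneg hMu0 (add_nonneg (norm_nonneg _) (norm_nonneg _)))
  have : ‖u' x‖ ≤ (M1 + Mu * (‖Q x‖ + ‖r x‖)) * C2 := by
    rw [hux, norm_div, div_eq_mul_inv]
    exact mul_le_mul hnum hinv (inv_nonneg.mpr (norm_nonneg _)) hnn
  refine le_trans ?_ (le_abs_self _)
  show ‖u' x‖ ≤ C2 * (M1 + Mu * (‖Q x‖ + ‖r x‖))
  calc ‖u' x‖ ≤ (M1 + Mu * (‖Q x‖ + ‖r x‖)) * C2 := this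
    _ = C2 * (M1 + Mu * (‖Q x‖ + ‖r x‖)) := mul_comm _ _


end
end
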